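/- Concentration of rays at the caustic: if D : (0, π/2) → ℝ is continuously differentiable with a unique interior critical point i* which is a nondegenerate minimum, then for incidence angles uniformly distributed, the density of outgoing deviation angles diverges at D(i*): for any sequence of angles δₖ → D(i*)+ with δₖ > D(i*), the measure of {i : D(i) ≤ δₖ} behaves like C·√(δₖ − D(i*)) for some C > 0; in particular the pushforward density (dδ-measure) is unbounded near D(i*). -/

import Mathlib

open Real MeasureTheory

open Set Filter Topology in
/-- Concentration of rays at the caustic: if `D` is `C²` on `ℝ` with a unique
critical point `i* ∈ (0, π/2)` which is nondegenerate (`D''(i*) > 0`), then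
the Lebesgue measure of `{i ∈ (0, π/2) : D i ≤ D i* + ε}` behaves like
`C √ε` as `ε → 0⁺` for some constant `C > 0`; in particular the pushforward
density of deviation angles diverges at `D i*`. -/
theorem caustic_intensity_divergence
    (D : ℝ → ℝ) (hD : ContDiff ℝ 2 D)
    (istar : ℝ) (histar : istar ∈ Set.Ioo 0 (π / 2))
    (hcrit : deriv D istar = 0)
    (hnondeg : 0 < deriv (deriv D) istar)
    (hunique : ∀ i ∈ Set.Ioo 0 (π / 2), i ≠ istar → deriv D i ≠ 0) :
    ∃ C > 0, Filter.Tendsto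
      (fun ε : ℝ =>
        (volume {i ∈ Set.Ioo 0 (π / 2) | D i ≤ D istar + ε}).toReal /
          Real.sqrt ε)
      (nhdsWithin 0 (Set.Ioi 0)) (nhds C) := by
  obtain ⟨hi0, hi2⟩ := histar
  set m := D istar with hm
  set k := deriv (deriv D) istar with hk
  have hDc : Continuous D := hD.continuous
  have hD1 : Differentiable ℝ D := hD.differentiable (by norm_num)
  have hdd : Differentiable ℝ (deriv D) := by
    have h : ContDiff ℝ (1 + 1) D := by norm_num [hD]
    rw [contDiff_succ_iff_deriv] at h
    exact h.2.2.differentiable (by norm_num)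
  have hddc : Continuous (deriv D) := hdd.continuous
  have hDA : HasDerivAt (deriv D) k istar := (hdd istar).hasDerivAt
  -- slope limit
  have hslope : Tendsto (fun x => deriv D x / (x - istar)) (𝓝[≠] istar) (𝓝 k) := by
    have := hasDerivAt_iff_tendsto_slope.1 hDA
    exact this.congr fun x => by simp [slope_def_field, hcrit]
  -- sign of deriv D near istar, then on whole intervals
  have hev : ∀ᶠ x in 𝓝[≠] istar, 0 < deriv D x / (x - istar) :=
    hslope.eventually (eventually_gt_nhds hnondeg)
  have hIooL : Ioo 0 istar ∈ 𝓝[<] istar := by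
    rw [show Ioo 0 istar = Ioi 0 ∩ Iio istar from rfl]
    exact Filter.inter_mem (mem_nhdsWithin_of_mem_nhds (Ioi_mem_nhds hi0))
      self_mem_nhdsWithin
  have hIooR : Ioo istar (π / 2) ∈ 𝓝[>] istar := by
    rw [show Ioo istar (π / 2) = Ioi istar ∩ Iio (π / 2) from rfl]
    exact Filter.inter_mem self_mem_nhdsWithin
      (mem_nhdsWithin_of_mem_nhds (Iio_mem_nhds hi2))
  have hLle : 𝓝[<] istar ≤ 𝓝[≠] istar :=
    nhdsWithin_mono _ fun x hx => ne_of_lt hx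
  have hRle : 𝓝[>] istar ≤ 𝓝[≠] istar :=
    nhdsWithin_mono _ fun x hx => ne_of_gt hx
  obtain ⟨p, hp1, hp2⟩ := ((hev.filter_mono hLle).and
    (eventually_of_mem hIooL fun x hx => hx)).exists
  obtain ⟨q, hq1, hq2⟩ := ((hev.filter_mono hRle).and
    (eventually_of_mem hIooR fun x hx => hx)).exists
  have hpneg : deriv D p < 0 := by
    rcases lt_or_ge (deriv D p) 0 with h | h
    · exact h
    · exfalso
      have : deriv D p / (p - istar) ≤ 0 :=
        div_nonpos_iff.2 (Or.inl ⟨h, by linarith [hp2.2]⟩)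
      linarith
  have hqpos : 0 < deriv D q := by
    rcases lt_or_ge 0 (deriv D q) with h | h
    · exact h
    · exfalso
      have : deriv D q / (q - istar) ≤ 0 :=
        div_nonpos_iff.2 (Or.inr ⟨h, by linarith [hq2.1]⟩)
      linarith
  -- sign on whole intervals via IVT
  have hneg : ∀ x ∈ Ioo 0 istar, deriv D x < 0 := by
    intro x hx
    by_contra hcon
    push_neg at hcon
    have hsub : uIcc p x ⊆ Ioo 0 istar :=
      (Set.ordConnected_Ioo).uIcc_subset hp2 hx
    have : (0 : ℝ) ∈ uIcc (deriv D p) (deriv D x) :=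
      Set.mem_uIcc.2 (Or.inl ⟨le_of_lt hpneg, hcon⟩)
    obtain ⟨c, hc, hc0⟩ := intermediate_value_uIcc (hddc.continuousOn) this
    have hcmem := hsub hc
    exact hunique c ⟨hcmem.1, lt_trans hcmem.2 hi2⟩ (ne_of_lt hcmem.2) hc0
  have hpos : ∀ x ∈ Ioo istar (π / 2), 0 < deriv D x := by
    intro x hx
    by_contra hcon
    push_neg at hcon
    have hsub : uIcc q x ⊆ Ioo istar (π / 2) :=
      (Set.ordConnected_Ioo).uIcc_subset hq2 hx
    have : (0 : ℝ) ∈ uIcc (deriv D q) (deriv D x) :=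
      Set.mem_uIcc.2 (Or.inr ⟨hcon, le_of_lt hqpos⟩)
    obtain ⟨c, hc, hc0⟩ := intermediate_value_uIcc (hddc.continuousOn) this
    have hcmem := hsub hc
    exact hunique c ⟨lt_trans hi0 hcmem.1, hcmem.2⟩ (ne_of_gt hcmem.1) hc0
  -- monotonicity
  have hanti : StrictAntiOn D (Ioc 0 istar) := by
    apply strictAntiOn_of_deriv_neg (convex_Ioc 0 istar) hDc.continuousOn
    rw [interior_Ioc]; exact hneg
  have hmono : StrictMonoOn D (Ico istar (π / 2)) := by
    apply strictMonoOn_of_deriv_pos (convex_Ico istar (π / 2)) hDc.continuousOn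
    rw [interior_Ico]; exact hpos
  -- bracketing points
  set l := istar / 2 with hl
  set r := (istar + π / 2) / 2 with hr
  have hl0 : 0 < l := by positivity
  have hli : l < istar := by rw [hl]; linarith
  have hir : istar < r := by rw [hr]; linarith
  have hr2 : r < π / 2 := by rw [hr]; linarith
  have hml : m < D l := hanti ⟨hl0, le_of_lt hli⟩ ⟨hi0, le_refl _⟩ hli
  have hmr : m < D r := hmono ⟨le_refl _, hi2⟩ ⟨le_of_lt hir, hr2⟩ hir
  set ε₁ := min (D l - m) (D r - m) with hε₁def
  have hε₁ : 0 < ε₁ := lt_min (by linarith) (by linarith)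
  -- existence of inverse points
  have hbex : ∀ ε ∈ Ioo (0:ℝ) ε₁, ∃ x ∈ Ioo istar r, D x = m + ε := by
    intro ε hε
    have : m + ε ∈ Ioo (D istar) (D r) :=
      ⟨by linarith [hε.1, hm], by have := min_le_right (D l - m) (D r - m); linarith [hε.2]⟩
    obtain ⟨x, hx, hDx⟩ := intermediate_value_Ioo (le_of_lt hir) hDc.continuousOn this
    exact ⟨x, hx, hDx⟩
  have haex : ∀ ε ∈ Ioo (0:ℝ) ε₁, ∃ x ∈ Ioo l istar, D x = m + ε := by
    intro ε hε
    have : m + ε ∈ Ioo (D istar) (D l) :=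
      ⟨by linarith [hε.1, hm], by have := min_le_left (D l - m) (D r - m); linarith [hε.2]⟩
    obtain ⟨x, hx, hDx⟩ := intermediate_value_Ioo' (le_of_lt hli) hDc.continuousOn this
    exact ⟨x, hx, hDx⟩
  choose! b hbmem hbval using hbex
  choose! a hamem haval using haex
  have hIε : Ioo (0:ℝ) ε₁ ∈ 𝓝[>] (0:ℝ) :=
    Ioo_mem_nhdsGT_of_mem ⟨le_refl 0, hε₁⟩
  -- tendsto of b to istar from the right
  have htb : Tendsto b (𝓝[>] (0:ℝ)) (𝓝 istar) := by
    rw [tendsto_order]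
    constructor
    · intro c hc
      filter_upwards [hIε] with ε hε
      exact lt_trans hc (hbmem ε hε).1
    · intro c hc
      set y := (istar + min c r) / 2 with hy
      have hminc : istar < min c r := lt_min hc hir
      have hyi : istar < y := by rw [hy]; linarith
      have hyr : y < r := by
        have := min_le_right c r; rw [hy]; linarith
      have hyc : y < c := by
        have := min_le_left c r; rw [hy]; linarith
      have hDy : m < D y := hmono ⟨le_refl _, hi2⟩ ⟨le_of_lt hyi, by linarith⟩ hyi
      filter_upwards [hIε, Ioo_mem_nhdsGT_of_mem
        (α := ℝ) ⟨le_refl 0, (by linarith : (0:ℝ) < D y - m)⟩] with ε hε hε'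
      have hb1 := (hbmem ε hε).1
      have hb2 := (hbmem ε hε).2
      have hbv := hbval ε hε
      have : D (b ε) < D y := by rw [hbv]; linarith [hε'.2]
      have : b ε < y := by
        by_contra hcon
        push_neg at hcon
        rcases eq_or_lt_of_le hcon with heq | hlt
        · rw [← heq] at this; linarith
        · have := hmono ⟨le_of_lt hyi, by linarith⟩ ⟨le_of_lt hb1, by linarith⟩ hlt
          linarith
      linarith
  have hta : Tendsto a (𝓝[>] (0:ℝ)) (𝓝 istar) := by
    rw [tendsto_order]
    constructor
    · intro c hc
      set y := (max c l + istar) / 2 with hy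
      have hminc : max c l < istar := max_lt hc hli
      have hyi : y < istar := by rw [hy]; linarith
      have hyl : l < y := by
        have := le_max_right c l; rw [hy]; linarith
      have hyc : c < y := by
        have := le_max_left c l; rw [hy]; linarith
      have hDy : m < D y := hanti ⟨by linarith, le_of_lt hyi⟩ ⟨hi0, le_refl _⟩ hyi
      filter_upwards [hIε, Ioo_mem_nhdsGT_of_mem
        (α := ℝ) ⟨le_refl 0, (by linarith : (0:ℝ) < D y - m)⟩] with ε hε hε'
      have ha1 := (hamem ε hε).1
      have ha2 := (hamem ε hε).2
      have hav := haval ε hε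
      have hDa : D (a ε) < D y := by rw [hav]; linarith [hε'.2]
      have : y < a ε := by
        by_contra hcon
        push_neg at hcon
        rcases eq_or_lt_of_le hcon with heq | hlt
        · rw [heq] at hDa; linarith
        · have := hanti ⟨by linarith, le_of_lt ha2⟩ ⟨by linarith, le_of_lt hyi⟩ hlt
          linarith
      linarith
    · intro c hc
      filter_upwards [hIε] with ε hε
      exact lt_trans (hamem ε hε).2 hc
  -- L'Hopital limits
  have hgd : ∀ x : ℝ, HasDerivAt (fun y => (y - istar) ^ 2) (2 * (x - istar)) x := by
    intro x
    have := ((hasDerivAt_id x).sub_const istar).fun_pow 2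
    simpa using this
  have hfd : ∀ x : ℝ, HasDerivAt (fun y => D y - m) (deriv D x) x :=
    fun x => (hD1 x).hasDerivAt.sub_const m
  have hdivR : Tendsto (fun x => deriv D x / (2 * (x - istar))) (𝓝[>] istar) (𝓝 (k / 2)) := by
    have h2 : Tendsto (fun x => deriv D x / (x - istar) / 2) (𝓝[>] istar) (𝓝 (k / 2)) :=
      ((hslope.mono_left hRle).div_const 2)
    exact h2.congr fun x => by rw [div_div, mul_comm]
  have hdivL : Tendsto (fun x => deriv D x / (2 * (x - istar))) (𝓝[<] istar) (𝓝 (k / 2)) := by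
    have h2 : Tendsto (fun x => deriv D x / (x - istar) / 2) (𝓝[<] istar) (𝓝 (k / 2)) :=
      ((hslope.mono_left hLle).div_const 2)
    exact h2.congr fun x => by rw [div_div, mul_comm]
  have hf0 : Tendsto (fun x => D x - m) (𝓝 istar) (𝓝 0) := by
    have := (hDc.tendsto istar).sub_const m
    simpa [hm] using this
  have hg0 : Tendsto (fun x : ℝ => (x - istar) ^ 2) (𝓝 istar) (𝓝 0) := by
    have : Tendsto (fun x : ℝ => (x - istar) ^ 2) (𝓝 istar) (𝓝 ((istar - istar)^2)) :=
      ((continuous_id.sub continuous_const).pow 2).tendsto istar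
    simpa using this
  have hright : Tendsto (fun x => (D x - m) / (x - istar) ^ 2) (𝓝[>] istar) (𝓝 (k / 2)) := by
    apply HasDerivAt.lhopital_zero_right_on_Ioo hir (fun x _ => hfd x) (fun x _ => hgd x)
    · intro x hx
      have h1 : istar < x := hx.1
      have : 0 < 2 * (x - istar) := by linarith
      exact ne_of_gt this
    · exact hf0.mono_left nhdsWithin_le_nhds
    · exact hg0.mono_left nhdsWithin_le_nhds
    · exact hdivR
  have hleft : Tendsto (fun x => (D x - m) / (x - istar) ^ 2) (𝓝[<] istar) (𝓝 (k / 2)) := by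
    apply HasDerivAt.lhopital_zero_left_on_Ioo hli (fun x _ => hfd x) (fun x _ => hgd x)
    · intro x hx
      have h1 : x < istar := hx.2
      have : 2 * (x - istar) < 0 := by linarith
      exact ne_of_lt this
    · exact hf0.mono_left nhdsWithin_le_nhds
    · exact hg0.mono_left nhdsWithin_le_nhds
    · exact hdivL
  -- compose with b and a
  have htb' : Tendsto b (𝓝[>] (0:ℝ)) (𝓝[>] istar) := by
    rw [tendsto_nhdsWithin_iff]
    exact ⟨htb, eventually_of_mem hIε fun ε hε => (hbmem ε hε).1⟩
  have hta' : Tendsto a (𝓝[>] (0:ℝ)) (𝓝[<] istar) := by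
    rw [tendsto_nhdsWithin_iff]
    exact ⟨hta, eventually_of_mem hIε fun ε hε => (hamem ε hε).2⟩
  have hk2 : (0:ℝ) < k / 2 := by linarith
  have h2k : (0:ℝ) < 2 / k := by positivity
  -- right branch asymptotics
  have hBlim : Tendsto (fun ε => (b ε - istar) / Real.sqrt ε) (𝓝[>] (0:ℝ))
      (𝓝 (Real.sqrt (2 / k))) := by
    have h1 : Tendsto (fun ε => (D (b ε) - m) / (b ε - istar) ^ 2) (𝓝[>] (0:ℝ))
        (𝓝 (k / 2)) := hright.comp htb'
    have h2 : Tendsto (fun ε => ε / (b ε - istar) ^ 2) (𝓝[>] (0:ℝ)) (𝓝 (k / 2)) := by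
      apply h1.congr'
      filter_upwards [hIε] with ε hε
      rw [hbval ε hε]; ring_nf
    have h3 : Tendsto (fun ε => (b ε - istar) ^ 2 / ε) (𝓝[>] (0:ℝ)) (𝓝 (2 / k)) := by
      have := h2.inv₀ (ne_of_gt hk2)
      rw [show (k / 2)⁻¹ = 2 / k from inv_div k 2] at this
      apply this.congr fun ε => ?_
      rw [← one_div, one_div_div]
    have h4 : Tendsto (fun ε => Real.sqrt ((b ε - istar) ^ 2 / ε)) (𝓝[>] (0:ℝ))
        (𝓝 (Real.sqrt (2 / k))) := (Real.continuous_sqrt.tendsto _).comp h3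
    apply h4.congr'
    filter_upwards [hIε] with ε hε
    rw [Real.sqrt_div (sq_nonneg _), Real.sqrt_sq (by linarith [(hbmem ε hε).1])]
  have hAlim : Tendsto (fun ε => (istar - a ε) / Real.sqrt ε) (𝓝[>] (0:ℝ))
      (𝓝 (Real.sqrt (2 / k))) := by
    have h1 : Tendsto (fun ε => (D (a ε) - m) / (a ε - istar) ^ 2) (𝓝[>] (0:ℝ))
        (𝓝 (k / 2)) := hleft.comp hta'
    have h2 : Tendsto (fun ε => ε / (istar - a ε) ^ 2) (𝓝[>] (0:ℝ)) (𝓝 (k / 2)) := by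
      apply h1.congr'
      filter_upwards [hIε] with ε hε
      rw [haval ε hε]
      have : (a ε - istar) ^ 2 = (istar - a ε) ^ 2 := by ring
      rw [this]; ring_nf
    have h3 : Tendsto (fun ε => (istar - a ε) ^ 2 / ε) (𝓝[>] (0:ℝ)) (𝓝 (2 / k)) := by
      have := h2.inv₀ (ne_of_gt hk2)
      rw [show (k / 2)⁻¹ = 2 / k from inv_div k 2] at this
      apply this.congr fun ε => ?_
      rw [← one_div, one_div_div]
    have h4 : Tendsto (fun ε => Real.sqrt ((istar - a ε) ^ 2 / ε)) (𝓝[>] (0:ℝ))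
        (𝓝 (Real.sqrt (2 / k))) := (Real.continuous_sqrt.tendsto _).comp h3
    apply h4.congr'
    filter_upwards [hIε] with ε hε
    rw [Real.sqrt_div (sq_nonneg _), Real.sqrt_sq (by linarith [(hamem ε hε).2])]
  -- the sublevel set is Icc (a ε) (b ε)
  have hset : ∀ ε ∈ Ioo (0:ℝ) ε₁,
      {i ∈ Ioo 0 (π / 2) | D i ≤ m + ε} = Icc (a ε) (b ε) := by
    intro ε hε
    have ha1 := (hamem ε hε).1
    have ha2 := (hamem ε hε).2
    have hb1 := (hbmem ε hε).1
    have hb2 := (hbmem ε hε).2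
    have hav := haval ε hε
    have hbv := hbval ε hε
    ext i
    simp only [Set.mem_setOf_eq, Set.mem_Icc, Set.mem_Ioo]
    constructor
    · rintro ⟨⟨hi1, hi2'⟩, hDi⟩
      constructor
      · by_contra hcon
        push_neg at hcon
        have : D (a ε) < D i :=
          hanti ⟨hi1, by linarith⟩ ⟨by linarith, le_of_lt ha2⟩ hcon
        rw [hav] at this; linarith
      · by_contra hcon
        push_neg at hcon
        have : D (b ε) < D i :=
          hmono ⟨le_of_lt hb1, by linarith⟩ ⟨by linarith, hi2'⟩ hcon
        rw [hbv] at this; linarith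
    · rintro ⟨h1, h2⟩
      refine ⟨⟨by linarith, by linarith⟩, ?_⟩
      rcases le_total i istar with hcase | hcase
      · rcases eq_or_lt_of_le h1 with heq | hlt
        · rw [← heq, hav]
        · have : D i < D (a ε) :=
            hanti ⟨by linarith, le_of_lt ha2⟩ ⟨by linarith, hcase⟩ hlt
          rw [hav] at this; linarith
      · rcases eq_or_lt_of_le h2 with heq | hlt
        · rw [heq, hbv]
        · have : D i < D (b ε) :=
            hmono ⟨hcase, by linarith⟩ ⟨le_of_lt hb1, by linarith⟩ hlt
          rw [hbv] at this; linarith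
  -- conclusion
  refine ⟨Real.sqrt (2 / k) + Real.sqrt (2 / k), by positivity, ?_⟩
  have htotal : Tendsto (fun ε => (b ε - istar) / Real.sqrt ε + (istar - a ε) / Real.sqrt ε)
      (𝓝[>] (0:ℝ)) (𝓝 (Real.sqrt (2 / k) + Real.sqrt (2 / k))) := hBlim.add hAlim
  apply htotal.congr'
  filter_upwards [hIε] with ε hε
  have ha2 := (hamem ε hε).2
  have hb1 := (hbmem ε hε).1
  rw [hset ε hε, Real.volume_Icc, ENNReal.toReal_ofReal (by linarith)]
  rw [← add_div]
  ring_nf
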